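/- There exists $n_0$ such that for every $n \geq n_0$ with $n \equiv 0 \pmod{15}$, there is a 3-uniform hypergraph $H$ on $n$ vertices with no isolated vertices satisfying: (1) $\deg(u)+\deg(v) > 2\left(\binom{n-1}{2} - \binom{2n/3}{2}\right)$ for all adjacent vertices $u,v$; (2) $H$ has no perfect matching; (3) $H$ is not (isomorphic to) a subgraph of $H^2_{n,n/3}$. -/

import Mathlib

open Finset

/-- The degree of a vertex in a 3-graph given by its edge set. -/
def hdeg {n : ℕ} (E : Finset (Finset (Fin n))) (v : Fin n) : ℕ :=
  (E.filter (fun e => v ∈ e)).card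

/-- The edge set of `H²_{n,s}`: partition into `S` (first `n-2s+1` vertices) and
`T` (last `2s-1` vertices); edges are triples with at least two vertices in `T`. -/
def H2edges (n s : ℕ) : Finset (Finset (Fin n)) :=
  (Finset.univ.powersetCard 3).filter
    (fun e => 2 ≤ (e.filter (fun v : Fin n => n - 2 * s + 1 ≤ v.val)).card)

namespace ZL
variable (m : ℕ)

def pR (v : Fin (15*m)) : Prop := v.val < 3*m
def pS (v : Fin (15*m)) : Prop := 3*m ≤ v.val ∧ v.val < 7*m+1
def pT (v : Fin (15*m)) : Prop := 7*m+1 ≤ v.val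
instance : DecidablePred (pR m) := fun v => by unfold pR; infer_instance
instance : DecidablePred (pS m) := fun v => by unfold pS; infer_instance
instance : DecidablePred (pT m) := fun v => by unfold pT; infer_instance
def cR (e : Finset (Fin (15*m))) : ℕ := (e.filter (pR m)).card
def cS (e : Finset (Fin (15*m))) : ℕ := (e.filter (pS m)).card
def cT (e : Finset (Fin (15*m))) : ℕ := (e.filter (pT m)).card
def good (e : Finset (Fin (15*m))) : Prop :=
  (cR m e = 1 ∧ cS m e = 0 ∧ cT m e = 2) ∨ (cR m e = 0 ∧ cS m e = 1 ∧ cT m e = 2) ∨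
  (cR m e = 0 ∧ cS m e = 2 ∧ cT m e = 1) ∨ (cR m e = 0 ∧ cS m e = 0 ∧ cT m e = 3)
instance : DecidablePred (good m) := fun e => by unfold good; infer_instance
def E : Finset (Finset (Fin (15*m))) := (univ.powersetCard 3).filter (good m)
variable {m}

set_option linter.unreachableTactic false
set_option linter.unusedTactic false

lemma card_val_filter {N : ℕ} (P : Fin N → Prop) [DecidablePred P] (a b : ℕ)
    (h : ∀ v : Fin N, P v ↔ a ≤ v.val ∧ v.val < b) (hb : b ≤ N) :
    (univ.filter P).card = b - a := by
  rw [← Finset.card_image_of_injective _ Fin.val_injective]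
  rw [show (univ.filter P).image Fin.val = Finset.Ico a b from by
    ext x
    simp only [Finset.mem_image, Finset.mem_filter, Finset.mem_univ, true_and, Finset.mem_Ico]
    constructor
    · rintro ⟨v, hv, rfl⟩; exact (h v).mp hv
    · rintro ⟨ha, hx⟩; exact ⟨⟨x, lt_of_lt_of_le hx hb⟩, (h _).mpr ⟨ha, hx⟩, rfl⟩]
  rw [Nat.card_Ico]

lemma cardR : (univ.filter (pR m)).card = 3*m := by
  rw [card_val_filter (pR m) 0 (3*m) (by intro v; simp [pR]) (by omega)]; omega

lemma cardS (hm : 1 ≤ m) : (univ.filter (pS m)).card = 4*m+1 := by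
  rw [card_val_filter (pS m) (3*m) (7*m+1) (by intro v; simp [pS]) (by omega)]; omega

lemma cardT (hm : 1 ≤ m) : (univ.filter (pT m)).card = 8*m-1 := by
  rw [card_val_filter (pT m) (7*m+1) (15*m) (by intro v; simp [pT, v.isLt]) (by omega)]; omega

lemma cardST (hm : 1 ≤ m) :
    (univ.filter (fun w : Fin (15*m) => pS m w ∨ pT m w)).card = 12*m := by
  rw [card_val_filter _ (3*m) (15*m)
    (by intro v; simp [pS, pT, v.isLt]; omega) (le_refl _)]
  omega

lemma cat_trichotomy (v : Fin (15*m)) : pR m v ∨ pS m v ∨ pT m v := by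
  simp only [pR, pS, pT]; omega

lemma pR_not_pS {v : Fin (15*m)} (h : pR m v) : ¬ pS m v := by simp only [pR, pS] at *; omega
lemma pR_not_pT {v : Fin (15*m)} (h : pR m v) : ¬ pT m v := by
  have := v.isLt; simp only [pR, pT] at *; omega
lemma pS_not_pT {v : Fin (15*m)} (h : pS m v) : ¬ pT m v := by simp only [pS, pT] at *; omega
lemma pS_not_pR {v : Fin (15*m)} (h : pS m v) : ¬ pR m v := by simp only [pR, pS] at *; omega
lemma pT_not_pR {v : Fin (15*m)} (h : pT m v) : ¬ pR m v := by
  have := v.isLt; simp only [pR, pT] at *; omega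
lemma pT_not_pS {v : Fin (15*m)} (h : pT m v) : ¬ pS m v := by simp only [pS, pT] at *; omega

lemma ne_of_cat {u v : Fin (15*m)} {P Q : Fin (15*m) → Prop} (hu : P u) (hv : Q v)
    (h : ∀ w, P w → ¬ Q w) : u ≠ v := fun e => h u hu (e ▸ hv)

lemma count_triple (p : Fin (15*m) → Prop) [DecidablePred p] {x y z : Fin (15*m)}
    (hxy : x ≠ y) (hxz : x ≠ z) (hyz : y ≠ z) :
    (({x, y, z} : Finset (Fin (15*m))).filter p).card
      = (if p x then 1 else 0) + (if p y then 1 else 0) + (if p z then 1 else 0) := by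
  rw [Finset.filter_insert, Finset.filter_insert, Finset.filter_singleton]
  split_ifs <;>
    simp_all [Finset.card_insert_of_notMem, Finset.mem_insert, Finset.mem_singleton, hxy, hxz, hyz] <;>
    omega

lemma card_triple {x y z : Fin (15*m)} (hxy : x ≠ y) (hxz : x ≠ z) (hyz : y ≠ z) :
    ({x, y, z} : Finset (Fin (15*m))).card = 3 := by
  rw [Finset.card_insert_of_notMem (by simp [hxy, hxz]),
    Finset.card_insert_of_notMem (by simp [hyz]), Finset.card_singleton]

lemma mem_E_of_counts {e : Finset (Fin (15*m))} (h3 : e.card = 3)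
    (h : (cR m e = 1 ∧ cS m e = 0 ∧ cT m e = 2) ∨ (cR m e = 0 ∧ cS m e = 1 ∧ cT m e = 2) ∨
      (cR m e = 0 ∧ cS m e = 2 ∧ cT m e = 1) ∨ (cR m e = 0 ∧ cS m e = 0 ∧ cT m e = 3)) :
    e ∈ E m := by
  rw [E, Finset.mem_filter, Finset.mem_powersetCard_univ]; exact ⟨h3, h⟩

lemma counts_triple {x y z : Fin (15*m)} (hxy : x ≠ y) (hxz : x ≠ z) (hyz : y ≠ z) :
    cR m {x,y,z} = ((if pR m x then 1 else 0) + (if pR m y then 1 else 0) + (if pR m z then 1 else 0))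
    ∧ cS m {x,y,z} = ((if pS m x then 1 else 0) + (if pS m y then 1 else 0) + (if pS m z then 1 else 0))
    ∧ cT m {x,y,z} = ((if pT m x then 1 else 0) + (if pT m y then 1 else 0) + (if pT m z then 1 else 0)) :=
  ⟨count_triple _ hxy hxz hyz, count_triple _ hxy hxz hyz, count_triple _ hxy hxz hyz⟩

lemma mem_E_RTT {v a b : Fin (15*m)} (hv : pR m v) (ha : pT m a) (hb : pT m b) (hab : a ≠ b) :
    ({v, a, b} : Finset (Fin (15*m))) ∈ E m := by
  have hva : v ≠ a := ne_of_cat hv ha (fun w hw => pR_not_pT hw)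
  have hvb : v ≠ b := ne_of_cat hv hb (fun w hw => pR_not_pT hw)
  obtain ⟨e1, e2, e3⟩ := counts_triple hva hvb hab
  refine mem_E_of_counts (card_triple hva hvb hab) (Or.inl ⟨?_, ?_, ?_⟩)
  · rw [e1]; simp [hv, pT_not_pR ha, pT_not_pR hb]
  · rw [e2]; simp [pR_not_pS hv, pT_not_pS ha, pT_not_pS hb]
  · rw [e3]; simp [pR_not_pT hv, ha, hb]

lemma mem_E_STT {v a b : Fin (15*m)} (hv : pS m v) (ha : pT m a) (hb : pT m b) (hab : a ≠ b) :
    ({v, a, b} : Finset (Fin (15*m))) ∈ E m := by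
  have hva : v ≠ a := ne_of_cat hv ha (fun w hw => pS_not_pT hw)
  have hvb : v ≠ b := ne_of_cat hv hb (fun w hw => pS_not_pT hw)
  obtain ⟨e1, e2, e3⟩ := counts_triple hva hvb hab
  refine mem_E_of_counts (card_triple hva hvb hab) (Or.inr (Or.inl ⟨?_, ?_, ?_⟩))
  · rw [e1]; simp [pS_not_pR hv, pT_not_pR ha, pT_not_pR hb]
  · rw [e2]; simp [hv, pT_not_pS ha, pT_not_pS hb]
  · rw [e3]; simp [pS_not_pT hv, ha, hb]

lemma mem_E_SST {v a b : Fin (15*m)} (hv : pS m v) (ha : pS m a) (hb : pT m b) (hva : v ≠ a) :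
    ({v, a, b} : Finset (Fin (15*m))) ∈ E m := by
  have hvb : v ≠ b := ne_of_cat hv hb (fun w hw => pS_not_pT hw)
  have hab : a ≠ b := ne_of_cat ha hb (fun w hw => pS_not_pT hw)
  obtain ⟨e1, e2, e3⟩ := counts_triple hva hvb hab
  refine mem_E_of_counts (card_triple hva hvb hab) (Or.inr (Or.inr (Or.inl ⟨?_, ?_, ?_⟩)))
  · rw [e1]; simp [pS_not_pR hv, pS_not_pR ha, pT_not_pR hb]
  · rw [e2]; simp [hv, ha, pT_not_pS hb]
  · rw [e3]; simp [pS_not_pT hv, pS_not_pT ha, hb]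

lemma mem_E_TTT {v a b : Fin (15*m)} (hv : pT m v) (ha : pT m a) (hb : pT m b)
    (hva : v ≠ a) (hvb : v ≠ b) (hab : a ≠ b) :
    ({v, a, b} : Finset (Fin (15*m))) ∈ E m := by
  obtain ⟨e1, e2, e3⟩ := counts_triple hva hvb hab
  refine mem_E_of_counts (card_triple hva hvb hab) (Or.inr (Or.inr (Or.inr ⟨?_, ?_, ?_⟩)))
  · rw [e1]; simp [pT_not_pR hv, pT_not_pR ha, pT_not_pR hb]
  · rw [e2]; simp [pT_not_pS hv, pT_not_pS ha, pT_not_pS hb]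
  · rw [e3]; simp [hv, ha, hb]

lemma mem_E_Tmix {v a b : Fin (15*m)} (hv : pT m v) (ha : pS m a ∨ pT m a)
    (hb : pS m b ∨ pT m b) (hva : v ≠ a) (hvb : v ≠ b) (hab : a ≠ b) :
    ({v, a, b} : Finset (Fin (15*m))) ∈ E m := by
  rcases ha with ha | ha <;> rcases hb with hb | hb
  · have h : ({v,a,b} : Finset (Fin (15*m))) = {a,b,v} := by ext x; simp; tauto
    rw [h]; exact mem_E_SST ha hb hv hab
  · have h : ({v,a,b} : Finset (Fin (15*m))) = {a,b,v} := by ext x; simp; tauto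
    rw [h]; exact mem_E_STT ha hb hv hvb.symm
  · have h : ({v,a,b} : Finset (Fin (15*m))) = {b,v,a} := by ext x; simp; tauto
    rw [h]; exact mem_E_STT hb hv ha hva
  · exact mem_E_TTT hv ha hb hva hvb hab

lemma two_mul_choose_two (a : ℕ) : 2 * a.choose 2 = a * (a - 1) := by
  rcases a with _ | b
  · simp
  · have hdvd : 2 ∣ (b+1)*b := by
      have h := (Nat.even_mul_succ_self b).two_dvd
      rwa [Nat.mul_comm] at h
    rw [Nat.choose_two_right]
    simp only [Nat.succ_sub_one]
    exact Nat.mul_div_cancel' hdvd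

lemma good_of_mem {e : Finset (Fin (15*m))} (he : e ∈ E m) : good m e :=
  (Finset.mem_filter.mp he).2

lemma card3_of_mem {e : Finset (Fin (15*m))} (he : e ∈ E m) : e.card = 3 :=
  Finset.mem_powersetCard_univ.mp (Finset.mem_filter.mp he).1

lemma degR_bound (hm : 1 ≤ m) {v : Fin (15*m)} (hv : pR m v) :
    32*m*m + 1 ≤ hdeg (E m) v + 12*m := by
  classical
  set T := univ.filter (pT m) with hT
  have key : (T.powersetCard 2).card ≤ hdeg (E m) v := by
    apply Finset.card_le_card_of_injOn (fun p => insert v p)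
    · intro p hp
      rw [Finset.mem_coe, Finset.mem_powersetCard] at hp
      obtain ⟨hsub, hcard⟩ := hp
      obtain ⟨a, b, hab, rfl⟩ := Finset.card_eq_two.mp hcard
      have ha : pT m a := (Finset.mem_filter.mp (hsub (by simp))).2
      have hb : pT m b := (Finset.mem_filter.mp (hsub (by simp))).2
      rw [Finset.mem_coe, Finset.mem_filter]
      exact ⟨mem_E_RTT hv ha hb hab, by simp⟩
    · intro p hp q hq h
      rw [Finset.mem_coe, Finset.mem_powersetCard] at hp hq
      have hvp : v ∉ p := fun hin => pR_not_pT hv (Finset.mem_filter.mp (hp.1 hin)).2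
      have hvq : v ∉ q := fun hin => pR_not_pT hv (Finset.mem_filter.mp (hq.1 hin)).2
      rw [← Finset.erase_insert hvp, ← Finset.erase_insert hvq]
      simp only at h
      rw [h]
  rw [Finset.card_powersetCard, cardT hm] at key
  obtain ⟨k, rfl⟩ : ∃ k, m = k + 1 := ⟨m - 1, by omega⟩
  have e2 : (8*(k+1)-1).choose 2 = 32*k*k + 52*k + 21 := by
    have h2 := two_mul_choose_two (8*(k+1)-1)
    rw [show 8*(k+1)-1 = 8*k+7 from by omega] at h2 ⊢
    rw [show 8*k+7-1 = 8*k+6 from by omega] at h2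
    nlinarith [h2]
  rw [e2] at key
  nlinarith [key]

lemma degS_bound (hm : 1 ≤ m) {v : Fin (15*m)} (hv : pS m v) :
    64*m*m + 1 ≤ hdeg (E m) v + 16*m := by
  classical
  set T := univ.filter (pT m) with hT
  set S := univ.filter (pS m) with hS
  have key : ((T.powersetCard 2).disjSum ((S.erase v) ×ˢ T)).card ≤ hdeg (E m) v := by
    apply Finset.card_le_card_of_injOn
      (Sum.elim (fun p => insert v p) (fun q => ({v, q.1, q.2} : Finset (Fin (15*m)))))
    · rintro (p | ⟨s, t⟩) hx
      · rw [Finset.mem_coe, Finset.inl_mem_disjSum, Finset.mem_powersetCard] at hx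
        obtain ⟨hsub, hcard⟩ := hx
        obtain ⟨a, b, hab, rfl⟩ := Finset.card_eq_two.mp hcard
        have ha : pT m a := (Finset.mem_filter.mp (hsub (by simp))).2
        have hb : pT m b := (Finset.mem_filter.mp (hsub (by simp))).2
        rw [Finset.mem_coe, Finset.mem_filter]
        exact ⟨mem_E_STT hv ha hb hab, by simp⟩
      · rw [Finset.mem_coe, Finset.inr_mem_disjSum, Finset.mem_product] at hx
        obtain ⟨hs, ht⟩ := hx
        have hs' : pS m s := (Finset.mem_filter.mp (Finset.mem_of_mem_erase hs)).2
        have hsv : s ≠ v := Finset.ne_of_mem_erase hs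
        have ht' : pT m t := (Finset.mem_filter.mp ht).2
        rw [Finset.mem_coe, Finset.mem_filter]
        exact ⟨mem_E_SST hv hs' ht' hsv.symm, by simp⟩
    · -- injectivity
      have hcS1 : ∀ p ∈ T.powersetCard 2, cS m (insert v p) = 1 := by
        intro p hp
        rw [Finset.mem_powersetCard] at hp
        obtain ⟨hsub, hcard⟩ := hp
        obtain ⟨a, b, hab, rfl⟩ := Finset.card_eq_two.mp hcard
        have ha : pT m a := (Finset.mem_filter.mp (hsub (by simp))).2
        have hb : pT m b := (Finset.mem_filter.mp (hsub (by simp))).2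
        have hva : v ≠ a := ne_of_cat hv ha (fun w hw => pS_not_pT hw)
        have hvb : v ≠ b := ne_of_cat hv hb (fun w hw => pS_not_pT hw)
        rw [show insert v ({a,b} : Finset (Fin (15*m))) = {v,a,b} from rfl,
          cS, count_triple _ hva hvb hab]
        simp [hv, pT_not_pS ha, pT_not_pS hb]
      have hcS2 : ∀ q ∈ (S.erase v) ×ˢ T, cS m {v, q.1, q.2} = 2 := by
        rintro ⟨s, t⟩ hq
        rw [Finset.mem_product] at hq
        obtain ⟨hs, ht⟩ := hq
        have hs' : pS m s := (Finset.mem_filter.mp (Finset.mem_of_mem_erase hs)).2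
        have hsv : s ≠ v := Finset.ne_of_mem_erase hs
        have ht' : pT m t := (Finset.mem_filter.mp ht).2
        have hvt : v ≠ t := ne_of_cat hv ht' (fun w hw => pS_not_pT hw)
        have hst : s ≠ t := ne_of_cat hs' ht' (fun w hw => pS_not_pT hw)
        rw [cS, count_triple _ hsv.symm hvt hst]
        simp [hv, hs', pT_not_pS ht']
      rintro (p | ⟨s, t⟩) hx (q | ⟨s', t'⟩) hy h <;> simp only [Sum.elim_inl, Sum.elim_inr] at h
      · rw [Finset.mem_coe, Finset.inl_mem_disjSum] at hx hy
        have hvp : v ∉ p := fun hin =>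
          pS_not_pT hv (Finset.mem_filter.mp ((Finset.mem_powersetCard.mp hx).1 hin)).2
        have hvq : v ∉ q := fun hin =>
          pS_not_pT hv (Finset.mem_filter.mp ((Finset.mem_powersetCard.mp hy).1 hin)).2
        rw [Sum.inl.injEq, ← Finset.erase_insert hvp, ← Finset.erase_insert hvq, h]
      · exfalso
        rw [Finset.mem_coe, Finset.inl_mem_disjSum] at hx
        rw [Finset.mem_coe, Finset.inr_mem_disjSum] at hy
        have h1 := hcS1 p hx
        have h2 := hcS2 (s', t') hy
        rw [h] at h1
        rw [h1] at h2
        exact absurd h2 (by norm_num)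
      · exfalso
        rw [Finset.mem_coe, Finset.inr_mem_disjSum] at hx
        rw [Finset.mem_coe, Finset.inl_mem_disjSum] at hy
        have h1 := hcS1 q hy
        have h2 := hcS2 (s, t) hx
        rw [← h] at h1
        rw [h1] at h2
        exact absurd h2 (by norm_num)
      · rw [Finset.mem_coe, Finset.inr_mem_disjSum, Finset.mem_product] at hx hy
        have hs : pS m s := (Finset.mem_filter.mp (Finset.mem_of_mem_erase hx.1)).2
        have hs' : pS m s' := (Finset.mem_filter.mp (Finset.mem_of_mem_erase hy.1)).2
        have ht : pT m t := (Finset.mem_filter.mp hx.2).2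
        have ht' : pT m t' := (Finset.mem_filter.mp hy.2).2
        have hsv : s ≠ v := Finset.ne_of_mem_erase hx.1
        have hsv' : s' ≠ v := Finset.ne_of_mem_erase hy.1
        have hseq : s = s' := by
          have : s ∈ ({v, s', t'} : Finset (Fin (15*m))) := by rw [← h]; simp
          simp only [Finset.mem_insert, Finset.mem_singleton] at this
          rcases this with h' | h' | h'
          · exact absurd h' hsv
          · exact h'
          · exact absurd (h' ▸ ht') (pS_not_pT hs)
        have hteq : t = t' := by
          have : t ∈ ({v, s', t'} : Finset (Fin (15*m))) := by rw [← h]; simp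
          simp only [Finset.mem_insert, Finset.mem_singleton] at this
          rcases this with h' | h' | h'
          · exact absurd (h' ▸ hv) (pT_not_pS ht)
          · exact absurd (h' ▸ hs') (pT_not_pS ht)
          · exact h'
        rw [Sum.inr.injEq, Prod.mk.injEq]
        exact ⟨hseq, hteq⟩
  rw [Finset.card_disjSum, Finset.card_powersetCard, Finset.card_product,
    Finset.card_erase_of_mem (by rw [hS, Finset.mem_filter]; exact ⟨Finset.mem_univ v, hv⟩),
    cardT hm, cardS hm] at key
  obtain ⟨k, rfl⟩ : ∃ k, m = k + 1 := ⟨m - 1, by omega⟩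
  have e2 : (8*(k+1)-1).choose 2 = 32*k*k + 52*k + 21 := by
    have h2 := two_mul_choose_two (8*(k+1)-1)
    rw [show 8*(k+1)-1 = 8*k+7 from by omega] at h2 ⊢
    rw [show 8*k+7-1 = 8*k+6 from by omega] at h2
    nlinarith [h2]
  rw [e2, show 4*(k+1)+1-1 = 4*k+4 from by omega,
    show 8*(k+1)-1 = 8*k+7 from by omega] at key
  nlinarith [key]

lemma degT_bound (hm : 1 ≤ m) {v : Fin (15*m)} (hv : pT m v) :
    96*m*m + 1 ≤ hdeg (E m) v + 24*m := by
  classical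
  set T := univ.filter (pT m) with hT
  set R := univ.filter (pR m) with hR
  set U := (univ.filter (fun w : Fin (15*m) => pS m w ∨ pT m w)).erase v with hU
  have hUmem : ∀ a ∈ U, (pS m a ∨ pT m a) ∧ a ≠ v := by
    intro a ha
    exact ⟨(Finset.mem_filter.mp (Finset.mem_of_mem_erase ha)).2, Finset.ne_of_mem_erase ha⟩
  have key : ((U.powersetCard 2).disjSum (R ×ˢ (T.erase v))).card ≤ hdeg (E m) v := by
    apply Finset.card_le_card_of_injOn
      (Sum.elim (fun p => insert v p) (fun q => ({v, q.1, q.2} : Finset (Fin (15*m)))))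
    · rintro (p | ⟨r, t⟩) hx
      · rw [Finset.mem_coe, Finset.inl_mem_disjSum, Finset.mem_powersetCard] at hx
        obtain ⟨hsub, hcard⟩ := hx
        obtain ⟨a, b, hab, rfl⟩ := Finset.card_eq_two.mp hcard
        obtain ⟨ha, hav⟩ := hUmem a (hsub (by simp))
        obtain ⟨hb, hbv⟩ := hUmem b (hsub (by simp))
        rw [Finset.mem_coe, Finset.mem_filter]
        exact ⟨mem_E_Tmix hv ha hb hav.symm hbv.symm hab, by simp⟩
      · rw [Finset.mem_coe, Finset.inr_mem_disjSum, Finset.mem_product] at hx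
        have hr : pR m r := (Finset.mem_filter.mp hx.1).2
        have ht : pT m t := (Finset.mem_filter.mp (Finset.mem_of_mem_erase hx.2)).2
        have htv : t ≠ v := Finset.ne_of_mem_erase hx.2
        have hre : ({v, r, t} : Finset (Fin (15*m))) = {r, v, t} := by
          ext x; simp; tauto
        show ({v, r, t} : Finset (Fin (15*m))) ∈ (E m).filter (fun e => v ∈ e)
        rw [Finset.mem_filter, hre]
        exact ⟨mem_E_RTT hr hv ht htv.symm, by simp⟩
    · have hc0 : ∀ p ∈ U.powersetCard 2, cR m (insert v p) = 0 := by
        intro p hp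
        rw [Finset.mem_powersetCard] at hp
        rw [cR, Finset.card_eq_zero, Finset.filter_eq_empty_iff]
        intro x hxmem
        rcases Finset.mem_insert.mp hxmem with rfl | hxp
        · exact pT_not_pR hv
        · rcases (hUmem x (hp.1 hxp)).1 with h' | h'
          · exact pS_not_pR h'
          · exact pT_not_pR h'
      have hc1 : ∀ q ∈ R ×ˢ (T.erase v), cR m ({v, q.1, q.2} : Finset (Fin (15*m))) ≠ 0 := by
        rintro ⟨r, t⟩ hq
        rw [Finset.mem_product] at hq
        have hr : pR m r := (Finset.mem_filter.mp hq.1).2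
        rw [cR]
        exact Nat.pos_iff_ne_zero.mp
          (Finset.card_pos.mpr ⟨r, Finset.mem_filter.mpr ⟨by simp, hr⟩⟩)
      rintro (p | ⟨r, t⟩) hx (q | ⟨r', t'⟩) hy h <;> simp only [Sum.elim_inl, Sum.elim_inr] at h
      · rw [Finset.mem_coe, Finset.inl_mem_disjSum] at hx hy
        have hvp : v ∉ p := fun hin => (hUmem v ((Finset.mem_powersetCard.mp hx).1 hin)).2 rfl
        have hvq : v ∉ q := fun hin => (hUmem v ((Finset.mem_powersetCard.mp hy).1 hin)).2 rfl
        rw [Sum.inl.injEq, ← Finset.erase_insert hvp, ← Finset.erase_insert hvq, h]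
      · exfalso
        rw [Finset.mem_coe, Finset.inl_mem_disjSum] at hx
        rw [Finset.mem_coe, Finset.inr_mem_disjSum] at hy
        exact hc1 (r', t') hy (h ▸ hc0 p hx)
      · exfalso
        rw [Finset.mem_coe, Finset.inr_mem_disjSum] at hx
        rw [Finset.mem_coe, Finset.inl_mem_disjSum] at hy
        exact hc1 (r, t) hx (h.symm ▸ hc0 q hy)
      · rw [Finset.mem_coe, Finset.inr_mem_disjSum, Finset.mem_product] at hx hy
        have hr : pR m r := (Finset.mem_filter.mp hx.1).2
        have hr' : pR m r' := (Finset.mem_filter.mp hy.1).2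
        have ht : pT m t := (Finset.mem_filter.mp (Finset.mem_of_mem_erase hx.2)).2
        have ht' : pT m t' := (Finset.mem_filter.mp (Finset.mem_of_mem_erase hy.2)).2
        have htv : t ≠ v := Finset.ne_of_mem_erase hx.2
        have hreq : r = r' := by
          have : r ∈ ({v, r', t'} : Finset (Fin (15*m))) := by rw [← h]; simp
          simp only [Finset.mem_insert, Finset.mem_singleton] at this
          rcases this with h' | h' | h'
          · exact absurd (h' ▸ hv) (pR_not_pT hr)
          · exact h'
          · exact absurd (h' ▸ ht') (pR_not_pT hr)
        have hteq : t = t' := by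
          have : t ∈ ({v, r', t'} : Finset (Fin (15*m))) := by rw [← h]; simp
          simp only [Finset.mem_insert, Finset.mem_singleton] at this
          rcases this with h' | h' | h'
          · exact absurd h' htv
          · exact absurd (h' ▸ hr') (pT_not_pR ht)
          · exact h'
        rw [Sum.inr.injEq, Prod.mk.injEq]
        exact ⟨hreq, hteq⟩
  rw [Finset.card_disjSum, Finset.card_powersetCard, Finset.card_product, hU,
    Finset.card_erase_of_mem (Finset.mem_filter.mpr ⟨Finset.mem_univ v, Or.inr hv⟩),
    cardST hm, hR, cardR, hT,
    Finset.card_erase_of_mem (Finset.mem_filter.mpr ⟨Finset.mem_univ v, hv⟩), cardT hm] at key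
  obtain ⟨k, rfl⟩ : ∃ k, m = k + 1 := ⟨m - 1, by omega⟩
  have e2 : (12*(k+1)-1).choose 2 = 72*k*k + 126*k + 55 := by
    have h2 := two_mul_choose_two (12*(k+1)-1)
    rw [show 12*(k+1)-1 = 12*k+11 from by omega] at h2 ⊢
    rw [show 12*k+11-1 = 12*k+10 from by omega] at h2
    nlinarith [h2]
  rw [e2, show 8*(k+1)-1-1 = 8*k+6 from by omega] at key
  nlinarith [key]

lemma thr (hm : 1 ≤ m) :
    2 * ((15*m - 1).choose 2 - ((2*(15*m))/3).choose 2) + 35*m = 125*(m*m) + 2 := by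
  obtain ⟨k, rfl⟩ : ∃ k, m = k + 1 := ⟨m - 1, by omega⟩
  have h2A : 2 * ((15*(k+1) - 1).choose 2) = 225*(k*k) + 405*k + 182 := by
    rw [show 15*(k+1)-1 = 15*k+14 from by omega, two_mul_choose_two,
      show 15*k+14-1 = 15*k+13 from by omega]
    ring
  have h2B : 2 * (((2*(15*(k+1)))/3).choose 2) = 100*(k*k) + 190*k + 90 := by
    rw [show (2*(15*(k+1)))/3 = 10*k+10 from by omega, two_mul_choose_two,
      show 10*k+10-1 = 10*k+9 from by omega]
    ring
  have hAB : ((2*(15*(k+1)))/3).choose 2 ≤ (15*(k+1) - 1).choose 2 := by nlinarith [h2A, h2B]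
  zify [hAB]
  zify at h2A h2B
  nlinarith [h2A, h2B]

-- classification
lemma pT_of_adj_pR {e : Finset (Fin (15*m))} (he : e ∈ E m) {u v : Fin (15*m)}
    (hu : u ∈ e) (hv : v ∈ e) (huv : u ≠ v) (hur : pR m u) : pT m v := by
  have hg := good_of_mem he
  have hcR1 : cR m e = 1 ∧ cS m e = 0 := by
    have h1 : 1 ≤ cR m e :=
      Finset.card_pos.mpr ⟨u, Finset.mem_filter.mpr ⟨hu, hur⟩⟩ |> Nat.one_le_iff_ne_zero.mpr ∘ Nat.pos_iff_ne_zero.mp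
    rcases hg with ⟨a,b,c⟩|⟨a,b,c⟩|⟨a,b,c⟩|⟨a,b,c⟩ <;> omega
  rcases cat_trichotomy v with hv' | hv' | hv'
  · exfalso
    have : 2 ≤ cR m e := by
      rw [cR]
      apply Finset.one_lt_card.mpr
      exact ⟨u, Finset.mem_filter.mpr ⟨hu, hur⟩, v, Finset.mem_filter.mpr ⟨hv, hv'⟩, huv⟩
    omega
  · exfalso
    have : 1 ≤ cS m e := Finset.card_pos.mpr ⟨v, Finset.mem_filter.mpr ⟨hv, hv'⟩⟩
    omega
  · exact hv'

lemma sum_filter_card_of_partition {M : Finset (Finset (Fin (15*m)))}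
    (hdisj : (M : Set (Finset (Fin (15*m)))).Pairwise (fun e f => Disjoint e f))
    (hsup : M.sup id = univ) (p : Fin (15*m) → Prop) [DecidablePred p] :
    ∑ e ∈ M, (e.filter p).card = (univ.filter p).card := by
  have h1 : (univ : Finset (Fin (15*m))).filter p = M.biUnion (fun e => (id e).filter p) := by
    rw [← Finset.filter_biUnion, ← Finset.sup_eq_biUnion, hsup]
  rw [h1, Finset.card_biUnion]
  · rfl
  · intro x hx y hy hxy
    exact Finset.disjoint_filter_filter (hdisj hx hy hxy)

lemma no_PM (hm : 1 ≤ m) :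
    ¬ ∃ M : Finset (Finset (Fin (15*m))), M ⊆ E m ∧
      (M : Set (Finset (Fin (15*m)))).Pairwise (fun e f => Disjoint e f) ∧
      M.sup id = Finset.univ := by
  rintro ⟨M, hsub, hdisj, hsup⟩
  classical
  have hgood : ∀ e ∈ M, good m e := fun e he => good_of_mem (hsub he)
  -- counting identities
  have hR : ∑ e ∈ M, cR m e = 3*m := by
    have := sum_filter_card_of_partition hdisj hsup (pR m)
    rw [cardR] at this
    exact this
  have hS : ∑ e ∈ M, cS m e = 4*m+1 := by
    have := sum_filter_card_of_partition hdisj hsup (pS m)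
    rw [cardS hm] at this
    exact this
  have hcard : 3 * M.card = 15*m := by
    have h := sum_filter_card_of_partition hdisj hsup (fun _ => True)
    simp only [Finset.filter_true_of_mem (fun x _ => trivial)] at h
    rw [Finset.card_univ, Fintype.card_fin] at h
    have h3 : ∑ x ∈ M, x.card = 3 * M.card := by
      rw [Finset.sum_congr rfl (fun e he => card3_of_mem (hsub he) : ∀ e ∈ M, e.card = 3),
        Finset.sum_const, smul_eq_mul]
      ring
    omega
  set b := (M.filter (fun e => cR m e = 1)).card with hb
  set c1 := (M.filter (fun e => cR m e = 0 ∧ cS m e = 1)).card with hc1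
  set c2 := (M.filter (fun e => cS m e = 2)).card with hc2
  set d := (M.filter (fun e => cT m e = 3 ∧ cS m e = 0)).card with hd
  have eqR : ∑ e ∈ M, cR m e = b := by
    rw [hb, Finset.card_filter]
    apply Finset.sum_congr rfl
    intro e he
    rcases hgood e he with ⟨h1,h2,h3⟩|⟨h1,h2,h3⟩|⟨h1,h2,h3⟩|⟨h1,h2,h3⟩ <;> simp [h1,h2,h3]
  have eqS : ∑ e ∈ M, cS m e = c1 + 2*c2 := by
    rw [hc1, hc2, Finset.card_filter, Finset.card_filter, Finset.mul_sum, ← Finset.sum_add_distrib]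
    apply Finset.sum_congr rfl
    intro e he
    rcases hgood e he with ⟨h1,h2,h3⟩|⟨h1,h2,h3⟩|⟨h1,h2,h3⟩|⟨h1,h2,h3⟩ <;> simp [h1,h2,h3]
  have eqM : M.card = b + c1 + c2 + d := by
    rw [hb, hc1, hc2, hd, Finset.card_filter, Finset.card_filter, Finset.card_filter,
      Finset.card_filter, ← Finset.sum_add_distrib, ← Finset.sum_add_distrib,
      ← Finset.sum_add_distrib, Finset.card_eq_sum_ones]
    apply Finset.sum_congr rfl
    intro e he
    rcases hgood e he with ⟨h1,h2,h3⟩|⟨h1,h2,h3⟩|⟨h1,h2,h3⟩|⟨h1,h2,h3⟩ <;> simp [h1,h2,h3]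
  omega

lemma no_embed (hm : 1 ≤ m) :
    ¬ ∃ f : Fin (15*m) → Fin (15*m), Function.Injective f ∧
      ∀ e ∈ E m, e.image f ∈ H2edges (15*m) (15*m/3) := by
  rintro ⟨f, hinj, hall⟩
  classical
  have htrans : ∀ e ∈ E m, 2 ≤ (e.filter (fun v => 5*m+1 ≤ (f v).val)).card := by
    intro e he
    have himg := hall e he
    rw [H2edges, Finset.mem_filter] at himg
    have h2 := himg.2
    rw [Finset.filter_image, Finset.card_image_of_injective _ hinj] at h2
    have heq : e.filter (fun a => 15*m - 2*(15*m/3) + 1 ≤ (f a).val)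
        = e.filter (fun a => 5*m+1 ≤ (f a).val) :=
      Finset.filter_congr (fun x _ => by omega)
    rwa [heq] at h2
  set A : Finset (Fin (15*m)) := univ.filter (fun v => ¬ (5*m+1 ≤ (f v).val)) with hA
  have hAq : ∀ v ∈ A, ¬ (5*m+1 ≤ (f v).val) := fun v hv => (Finset.mem_filter.mp hv).2
  have hAcard : 5*m+1 ≤ A.card := by
    have h1 : (univ.filter (fun v : Fin (15*m) => 5*m+1 ≤ (f v).val)).card ≤ 10*m - 1 := by
      have hsub2 : (univ.filter (fun v : Fin (15*m) => 5*m+1 ≤ (f v).val)).image f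
          ⊆ univ.filter (fun w : Fin (15*m) => 5*m+1 ≤ w.val) := by
        intro w hw
        rw [Finset.mem_image] at hw
        obtain ⟨v, hv, rfl⟩ := hw
        exact Finset.mem_filter.mpr ⟨Finset.mem_univ _, (Finset.mem_filter.mp hv).2⟩
      have hle := Finset.card_le_card hsub2
      rw [Finset.card_image_of_injective _ hinj,
        card_val_filter (fun w : Fin (15*m) => 5*m+1 ≤ w.val) (5*m+1) (15*m)
          (fun v => ⟨fun h => ⟨h, v.isLt⟩, fun h => h.1⟩) (le_refl _)] at hle
      omega
    have h2 := Finset.card_filter_add_card_filter_not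
      (s := (univ : Finset (Fin (15*m)))) (p := fun v => 5*m+1 ≤ (f v).val)
    rw [Finset.card_univ, Fintype.card_fin] at h2
    rw [hA]
    omega
  by_cases hT2 : 2 ≤ (A.filter (pT m)).card
  · obtain ⟨t1, ht1, t2, ht2, h12⟩ := Finset.one_lt_card.mp hT2
    rw [Finset.mem_filter] at ht1 ht2
    have hTbig : 2 < (univ.filter (pT m)).card := by rw [cardT hm]; omega
    have hne : ((univ.filter (pT m)) \ {t1, t2}).Nonempty := by
      apply Finset.card_pos.mp
      have hsub3 : ({t1, t2} : Finset (Fin (15*m))) ⊆ univ.filter (pT m) := by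
        intro x hx
        simp only [Finset.mem_insert, Finset.mem_singleton] at hx
        rcases hx with rfl | rfl
        · exact Finset.mem_filter.mpr ⟨Finset.mem_univ _, ht1.2⟩
        · exact Finset.mem_filter.mpr ⟨Finset.mem_univ _, ht2.2⟩
      rw [Finset.card_sdiff_of_subset hsub3]
      have hcc : ({t1,t2} : Finset (Fin (15*m))).card ≤ 2 :=
        (Finset.card_insert_le _ _).trans (by simp)
      omega
    obtain ⟨t3, ht3⟩ := hne
    rw [Finset.mem_sdiff] at ht3
    have ht3T : pT m t3 := (Finset.mem_filter.mp ht3.1).2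
    have h13 : t1 ≠ t3 := fun h => ht3.2 (by simp [h.symm])
    have h23 : t2 ≠ t3 := fun h => ht3.2 (by simp [h.symm])
    have he : ({t1,t2,t3} : Finset (Fin (15*m))) ∈ E m :=
      mem_E_TTT ht1.2 ht2.2 ht3T h12 h13 h23
    have hcount := htrans _ he
    have hsmall : (({t1,t2,t3} : Finset (Fin (15*m))).filter (fun v => 5*m+1 ≤ (f v).val))
        ⊆ {t3} := by
      intro x hx
      rw [Finset.mem_filter] at hx
      have hx1 := hx.1
      simp only [Finset.mem_insert, Finset.mem_singleton] at hx1
      rcases hx1 with rfl | rfl | rfl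
      · exact absurd hx.2 (hAq x ht1.1)
      · exact absurd hx.2 (hAq x ht2.1)
      · simp
    have hle := Finset.card_le_card hsmall
    simp only [Finset.card_singleton] at hle
    omega
  · by_cases hS2 : 2 ≤ (A.filter (pS m)).card
    · obtain ⟨s1, hs1, s2, hs2, h12⟩ := Finset.one_lt_card.mp hS2
      rw [Finset.mem_filter] at hs1 hs2
      have hTpos : 0 < (univ.filter (pT m)).card := by rw [cardT hm]; omega
      obtain ⟨t, ht⟩ := Finset.card_pos.mp hTpos
      have htT : pT m t := (Finset.mem_filter.mp ht).2
      have he : ({s1,s2,t} : Finset (Fin (15*m))) ∈ E m :=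
        mem_E_SST hs1.2 hs2.2 htT h12
      have hcount := htrans _ he
      have hsmall : (({s1,s2,t} : Finset (Fin (15*m))).filter (fun v => 5*m+1 ≤ (f v).val))
          ⊆ {t} := by
        intro x hx
        rw [Finset.mem_filter] at hx
        have hx1 := hx.1
        simp only [Finset.mem_insert, Finset.mem_singleton] at hx1
        rcases hx1 with rfl | rfl | rfl
        · exact absurd hx.2 (hAq x hs1.1)
        · exact absurd hx.2 (hAq x hs2.1)
        · simp
      have hle := Finset.card_le_card hsmall
      simp only [Finset.card_singleton] at hle
      omega
    · have hsplit : A ⊆ (A.filter (pR m)) ∪ (A.filter (pS m)) ∪ (A.filter (pT m)) := by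
        intro x hx
        rcases cat_trichotomy x with h | h | h <;>
          simp [Finset.mem_union, Finset.mem_filter, hx, h]
      have hc := Finset.card_le_card hsplit
      have hu1 := Finset.card_union_le ((A.filter (pR m)) ∪ (A.filter (pS m))) (A.filter (pT m))
      have hu2 := Finset.card_union_le (A.filter (pR m)) (A.filter (pS m))
      have hRle : (A.filter (pR m)).card ≤ 3*m := by
        have h := Finset.card_le_card (Finset.filter_subset_filter (pR m) (Finset.subset_univ A))
        rwa [cardR] at h
      omega

end ZL

/-- counterexample to the Zhang–Lu conjecture. -/
theorem stmt3 : ∃ n₀ : ℕ, ∀ n ≥ n₀, 15 ∣ n →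
    ∃ E : Finset (Finset (Fin n)),
      (∀ e ∈ E, e.card = 3) ∧
      (∀ v : Fin n, 0 < hdeg E v) ∧
      (∀ u v : Fin n, u ≠ v → (∃ e ∈ E, u ∈ e ∧ v ∈ e) →
        hdeg E u + hdeg E v > 2 * (Nat.choose (n - 1) 2 - Nat.choose (2 * n / 3) 2)) ∧
      (¬ ∃ M : Finset (Finset (Fin n)), M ⊆ E ∧
        (M : Set (Finset (Fin n))).Pairwise (fun e f => Disjoint e f) ∧
        M.sup id = Finset.univ) ∧
      (¬ ∃ f : Fin n → Fin n, Function.Injective f ∧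
        ∀ e ∈ E, e.image f ∈ H2edges n (n / 3)) := by
  use 15
  intro n hn hdvd
  obtain ⟨m, rfl⟩ := hdvd
  have hm : 1 ≤ m := by omega
  have hmm : m ≤ m*m := Nat.le_mul_of_pos_left m hm
  refine ⟨ZL.E m, fun e he => ZL.card3_of_mem he, ?_, ?_, ZL.no_PM hm, ZL.no_embed hm⟩
  · intro v
    rcases ZL.cat_trichotomy v with h | h | h
    · have hb := ZL.degR_bound hm h
      linarith
    · have hb := ZL.degS_bound hm h
      linarith
    · have hb := ZL.degT_bound hm h
      linarith
  · intro u v huv hadj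
    obtain ⟨e, he, hu, hv⟩ := hadj
    have hthr := ZL.thr hm
    rcases ZL.cat_trichotomy u with h | h | h
    · have hvT : ZL.pT m v := ZL.pT_of_adj_pR he hu hv huv h
      have h1 := ZL.degR_bound hm h
      have h2 := ZL.degT_bound hm hvT
      linarith
    · rcases ZL.cat_trichotomy v with h' | h' | h'
      · have huT : ZL.pT m u := ZL.pT_of_adj_pR he hv hu huv.symm h'
        exact absurd huT (ZL.pS_not_pT h)
      · have h1 := ZL.degS_bound hm h
        have h2 := ZL.degS_bound hm h'
        linarith
      · have h1 := ZL.degS_bound hm h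
        have h2 := ZL.degT_bound hm h'
        linarith
    · rcases ZL.cat_trichotomy v with h' | h' | h'
      · have h1 := ZL.degT_bound hm h
        have h2 := ZL.degR_bound hm h'
        linarith
      · have h1 := ZL.degT_bound hm h
        have h2 := ZL.degS_bound hm h'
        linarith
      · have h1 := ZL.degT_bound hm h
        have h2 := ZL.degT_bound hm h'
        linarith
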